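/- arXiv:1509.04174 — 3 statements merged into one kernel-verified Lean document; each statement's English description precedes it below -/
import Mathlib

section
/- The integral ∫₀^{2π} √(2−2cos φ)·(2 sin φ − φ cos φ − φ)/φ⁴ dφ is strictly positive. -/
open Real MeasureTheory

namespace IntegralSlice0Aux

/-- Cubic lower bound for sine on the nonnegative axis. -/
lemma sin_lb {x : ℝ} (hx : 0 ≤ x) : x - x ^ 3 / 6 ≤ Real.sin x := by
  have hd : ∀ y : ℝ, HasDerivAt (fun y : ℝ => Real.sin y - y + y ^ 3 / 6)
      (Real.cos y - 1 + y ^ 2 / 2) y := by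
    intro y
    have h1 := (Real.hasDerivAt_sin y).sub (hasDerivAt_id y)
    have h2 := (hasDerivAt_pow 3 y).div_const 6
    refine HasDerivAt.congr_deriv (h1.add h2) ?_
    push_cast
    ring
  have mono : Monotone (fun y : ℝ => Real.sin y - y + y ^ 3 / 6) := by
    apply monotone_of_deriv_nonneg
    · exact fun y => (hd y).differentiableAt
    · intro y
      rw [(hd y).deriv]
      nlinarith [Real.one_sub_sq_div_two_le_cos (x := y)]
  have h := mono hx
  simp only [Real.sin_zero] at h
  norm_num at h
  linarith

/-- Quartic upper bound for cosine on the nonnegative axis. -/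
lemma cos_ub {x : ℝ} (hx : 0 ≤ x) : Real.cos x ≤ 1 - x ^ 2 / 2 + x ^ 4 / 24 := by
  have hd : ∀ y : ℝ, HasDerivAt (fun y : ℝ => 1 - y ^ 2 / 2 + y ^ 4 / 24 - Real.cos y)
      (-y + y ^ 3 / 6 + Real.sin y) y := by
    intro y
    have h1 := (hasDerivAt_pow 2 y).div_const 2
    have h2 := (hasDerivAt_pow 4 y).div_const 24
    have h3 := Real.hasDerivAt_cos y
    refine HasDerivAt.congr_deriv ((((hasDerivAt_const y (1 : ℝ)).sub h1).add h2).sub h3) ?_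
    push_cast
    ring
  have mono : MonotoneOn (fun y : ℝ => 1 - y ^ 2 / 2 + y ^ 4 / 24 - Real.cos y) (Set.Ici 0) := by
    apply monotoneOn_of_deriv_nonneg (convex_Ici 0)
    · exact Continuous.continuousOn (by fun_prop)
    · intro y _
      exact (hd y).differentiableAt.differentiableWithinAt
    · intro y hy
      rw [interior_Ici] at hy
      rw [(hd y).deriv]
      have := sin_lb (le_of_lt hy)
      linarith
  have h := mono Set.self_mem_Ici (Set.mem_Ici.mpr hx) hx
  norm_num [Real.cos_zero] at h
  linarith

lemma sqrt_eq {φ : ℝ} (h0 : 0 ≤ φ) (h2 : φ ≤ 2 * π) :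
    Real.sqrt (2 - 2 * Real.cos φ) = 2 * Real.sin (φ / 2) := by
  have hs : 0 ≤ Real.sin (φ / 2) :=
    Real.sin_nonneg_of_nonneg_of_le_pi (by linarith) (by linarith)
  have hc : Real.cos φ = 1 - 2 * Real.sin (φ / 2) ^ 2 := by
    have h := Real.cos_two_mul (φ / 2)
    have h2' : Real.sin (φ / 2) ^ 2 + Real.cos (φ / 2) ^ 2 = 1 := Real.sin_sq_add_cos_sq _
    rw [show 2 * (φ / 2) = φ by ring] at h
    linarith
  rw [show 2 - 2 * Real.cos φ = (2 * Real.sin (φ / 2)) ^ 2 by rw [hc]; ring]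
  exact Real.sqrt_sq (by linarith)

/-- `2 sin φ − φ cos φ − φ ≥ 0` on `[0, π]`. -/
lemma g_nonneg {φ : ℝ} (h0 : 0 ≤ φ) (hπ : φ ≤ π) :
    0 ≤ 2 * Real.sin φ - φ * Real.cos φ - φ := by
  have hs := Real.sin_two_mul (φ / 2)
  have hcd := Real.cos_two_mul (φ / 2)
  rw [show 2 * (φ / 2) = φ by ring] at hs hcd
  have hc : 0 ≤ Real.cos (φ / 2) :=
    Real.cos_nonneg_of_mem_Icc ⟨by linarith [Real.pi_pos], by linarith⟩
  have key : φ / 2 * Real.cos (φ / 2) ≤ Real.sin (φ / 2) := by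
    rcases lt_or_ge (φ / 2) (π / 2) with h | h
    · have hcpos : 0 < Real.cos (φ / 2) :=
        Real.cos_pos_of_mem_Ioo ⟨by linarith [Real.pi_pos], h⟩
      have ht := Real.le_tan (by linarith : 0 ≤ φ / 2) h
      rw [Real.tan_eq_sin_div_cos] at ht
      calc φ / 2 * Real.cos (φ / 2)
          ≤ Real.sin (φ / 2) / Real.cos (φ / 2) * Real.cos (φ / 2) :=
            mul_le_mul_of_nonneg_right ht hcpos.le
        _ = Real.sin (φ / 2) := by field_simp
    · have heq : φ / 2 = π / 2 := le_antisymm (by linarith) h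
      rw [heq]
      simp [Real.sin_pi_div_two, Real.cos_pi_div_two]
  nlinarith [mul_nonneg hc (sub_nonneg.mpr key)]

/-- Derivative of a generic polynomial of degree at most 6. -/
lemma hasDerivAt_poly (c0 c1 c2 c3 c4 c5 c6 : ℝ) (x : ℝ) :
    HasDerivAt (fun x : ℝ => c0 + c1 * x + c2 * x ^ 2 + c3 * x ^ 3 + c4 * x ^ 4
        + c5 * x ^ 5 + c6 * x ^ 6)
      (c1 + 2 * c2 * x + 3 * c3 * x ^ 2 + 4 * c4 * x ^ 3 + 5 * c5 * x ^ 4 + 6 * c6 * x ^ 5) x := by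
  have h1 : HasDerivAt (fun x : ℝ => x) 1 x := hasDerivAt_id x
  have h := ((((((hasDerivAt_const x c0).add (h1.const_mul c1)).add
      ((hasDerivAt_pow 2 x).const_mul c2)).add ((hasDerivAt_pow 3 x).const_mul c3)).add
      ((hasDerivAt_pow 4 x).const_mul c4)).add ((hasDerivAt_pow 5 x).const_mul c5)).add
      ((hasDerivAt_pow 6 x).const_mul c6)
  refine HasDerivAt.congr_deriv h ?_
  push_cast
  ring

/-- Interval integral of a generic polynomial of degree at most 5. -/
lemma integral_poly (c0 c1 c2 c3 c4 c5 lo hi : ℝ) :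
    (∫ x in lo..hi, (c0 + c1 * x + c2 * x ^ 2 + c3 * x ^ 3 + c4 * x ^ 4 + c5 * x ^ 5)) =
      (c0 * hi + c1 * hi ^ 2 / 2 + c2 * hi ^ 3 / 3 + c3 * hi ^ 4 / 4 + c4 * hi ^ 5 / 5
        + c5 * hi ^ 6 / 6)
      - (c0 * lo + c1 * lo ^ 2 / 2 + c2 * lo ^ 3 / 3 + c3 * lo ^ 4 / 4 + c4 * lo ^ 5 / 5
        + c5 * lo ^ 6 / 6) := by
  have key : ∀ x ∈ Set.uIcc lo hi, HasDerivAt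
      (fun x : ℝ => 0 + c0 * x + (c1 / 2) * x ^ 2 + (c2 / 3) * x ^ 3 + (c3 / 4) * x ^ 4
        + (c4 / 5) * x ^ 5 + (c5 / 6) * x ^ 6)
      (c0 + c1 * x + c2 * x ^ 2 + c3 * x ^ 3 + c4 * x ^ 4 + c5 * x ^ 5) x := by
    intro x _
    have h := hasDerivAt_poly 0 c0 (c1 / 2) (c2 / 3) (c3 / 4) (c4 / 5) (c5 / 6) x
    convert h using 1
    ring
  rw [intervalIntegral.integral_eq_sub_of_hasDerivAt key
    (Continuous.intervalIntegrable (by fun_prop) lo hi)]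
  ring

end IntegralSlice0Aux

open IntegralSlice0Aux

set_option maxHeartbeats 2000000 in
/-- The integral `∫₀^{2π} √(2−2cos φ)·(2 sin φ − φ cos φ − φ)/φ⁴ dφ` is strictly positive. -/
theorem integral_slice0_pos :
    0 < ∫ φ in (0:ℝ)..(2*π),
        Real.sqrt (2 - 2*Real.cos φ) * (2*Real.sin φ - φ*Real.cos φ - φ) / φ^4 := by
  have hπgt : (3.141592 : ℝ) < π := Real.pi_gt_d6
  have hπlt : π < (3.141593 : ℝ) := Real.pi_lt_d6
  have hπpos : (0 : ℝ) < π := Real.pi_pos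
  have hπne : (π : ℝ) ≠ 0 := ne_of_gt hπpos
  obtain ⟨F, hF⟩ : ∃ F : ℝ → ℝ, F = fun φ =>
      Real.sqrt (2 - 2*Real.cos φ) * (2*Real.sin φ - φ*Real.cos φ - φ) / φ^4 := ⟨_, rfl⟩
  rw [show (fun φ => Real.sqrt (2 - 2*Real.cos φ) * (2*Real.sin φ - φ*Real.cos φ - φ) / φ^4)
      = F from hF.symm]
  -- global bound on (0, 2π]
  have hbound : ∀ x ∈ Set.Ioc (0 : ℝ) (2 * π), ‖F x‖ ≤ 1 / 2 := by
    rintro x ⟨hx0, hx2⟩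
    have hxnn : (0 : ℝ) ≤ x := hx0.le
    have hs0 : 0 ≤ Real.sin (x / 2) :=
      Real.sin_nonneg_of_nonneg_of_le_pi (by linarith) (by linarith)
    have hsx : 2 * Real.sin (x / 2) ≤ x := by
      have := Real.sin_le (show (0:ℝ) ≤ x / 2 by linarith)
      linarith
    have hgu : 2*Real.sin x - x*Real.cos x - x ≤ x ^ 3 / 2 := by
      have h1 := Real.sin_le hxnn
      have h2 := mul_le_mul_of_nonneg_left (Real.one_sub_sq_div_two_le_cos (x := x)) hxnn
      nlinarith
    have hgl : -(x ^ 3 / 2) ≤ 2*Real.sin x - x*Real.cos x - x := by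
      have h1 := sin_lb hxnn
      have h2 := mul_le_mul_of_nonneg_left (Real.cos_le_one x) hxnn
      nlinarith
    have habs : |2 * Real.sin (x / 2) * (2*Real.sin x - x*Real.cos x - x)| ≤ x * (x ^ 3 / 2) := by
      rw [abs_mul]
      have h1 : |2 * Real.sin (x / 2)| ≤ x := by
        rw [abs_of_nonneg (by linarith)]
        exact hsx
      have h2 : |2*Real.sin x - x*Real.cos x - x| ≤ x ^ 3 / 2 := abs_le.mpr ⟨hgl, hgu⟩
      exact mul_le_mul h1 h2 (abs_nonneg _) hxnn
    have hx4 : (0 : ℝ) < x ^ 4 := by positivity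
    have : F x = 2 * Real.sin (x / 2) * (2*Real.sin x - x*Real.cos x - x) / x ^ 4 := by
      simp only [hF]
      rw [sqrt_eq hxnn hx2]
    rw [this, Real.norm_eq_abs, abs_div, abs_of_pos hx4, div_le_iff₀ hx4]
    calc |2 * Real.sin (x / 2) * (2*Real.sin x - x*Real.cos x - x)|
        ≤ x * (x ^ 3 / 2) := habs
      _ = 1 / 2 * x ^ 4 := by ring
  -- integrability
  have hmeas : Measurable F := by
    rw [hF]
    fun_prop
  have hIntOn : IntegrableOn F (Set.Ioc 0 (2 * π)) := by
    apply MeasureTheory.Integrable.mono'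
      (g := fun _ : ℝ => (1 / 2 : ℝ)) ?_ (hmeas.aestronglyMeasurable.restrict) ?_
    · exact integrableOn_const measure_Ioc_lt_top.ne
    · rw [ae_restrict_iff' measurableSet_Ioc]
      exact MeasureTheory.ae_of_all _ hbound
  have hIntF : IntervalIntegrable F volume 0 (2 * π) := by
    rw [intervalIntegrable_iff, Set.uIoc_of_le (by linarith : (0:ℝ) ≤ 2 * π)]
    exact hIntOn
  have hsub : ∀ a b : ℝ, 0 ≤ a → a ≤ b → b ≤ 2 * π → IntervalIntegrable F volume a b := by
    intro a b ha hab hb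
    apply hIntF.mono_set
    rw [Set.uIcc_of_le hab, Set.uIcc_of_le (by linarith : (0:ℝ) ≤ 2 * π)]
    exact Set.Icc_subset_Icc ha hb
  -- Part A : ∫₀² F ≥ 29/135
  have hA : (29 / 135 : ℝ) ≤ ∫ x in (0:ℝ)..2, F x := by
    have hpt : ∀ x ∈ Set.Ioc (0:ℝ) 2,
        (1/6 : ℝ) + 0 * x + (-(7/144)) * x ^ 2 + 0 * x ^ 3 + (1/576) * x ^ 4 + 0 * x ^ 5
          ≤ F x := by
      rintro x ⟨hx0, hx2⟩
      have hxnn : (0:ℝ) ≤ x := hx0.le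
      have hx2π : x ≤ 2 * π := by linarith
      have hs2 : x - x ^ 3 / 24 ≤ 2 * Real.sin (x / 2) := by
        have := sin_lb (show (0:ℝ) ≤ x / 2 by linarith)
        nlinarith
      have hg : x ^ 3 / 6 - x ^ 5 / 24 ≤ 2*Real.sin x - x*Real.cos x - x := by
        have h1 := sin_lb hxnn
        have h2 := mul_le_mul_of_nonneg_left (cos_ub hxnn) hxnn
        nlinarith
      have hxx : x ^ 2 ≤ 4 := by nlinarith
      have hpos1 : 0 ≤ x - x ^ 3 / 24 := by
        nlinarith [mul_le_mul_of_nonneg_left hxx hxnn]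
      have hpos2 : 0 ≤ x ^ 3 / 6 - x ^ 5 / 24 := by
        nlinarith [mul_le_mul_of_nonneg_left hxx (pow_nonneg hxnn 3), pow_nonneg hxnn 3]
      have hs0 : 0 ≤ 2 * Real.sin (x / 2) := by
        have := Real.sin_nonneg_of_nonneg_of_le_pi (show (0:ℝ) ≤ x / 2 by linarith)
          (show x / 2 ≤ π by linarith)
        linarith
      have hmul : (x - x ^ 3 / 24) * (x ^ 3 / 6 - x ^ 5 / 24)
          ≤ 2 * Real.sin (x / 2) * (2*Real.sin x - x*Real.cos x - x) :=
        mul_le_mul hs2 hg hpos2 hs0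
      have hFx : F x = 2 * Real.sin (x / 2) * (2*Real.sin x - x*Real.cos x - x) / x ^ 4 := by
        simp only [hF]; rw [sqrt_eq hxnn hx2π]
      rw [hFx, le_div_iff₀ (by positivity : (0:ℝ) < x ^ 4)]
      calc ((1/6 : ℝ) + 0 * x + (-(7/144)) * x ^ 2 + 0 * x ^ 3 + (1/576) * x ^ 4 + 0 * x ^ 5)
            * x ^ 4
          = (x - x ^ 3 / 24) * (x ^ 3 / 6 - x ^ 5 / 24) := by ring
        _ ≤ _ := hmul
    calc (29 / 135 : ℝ)
        = ∫ x in (0:ℝ)..2,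
            ((1/6 : ℝ) + 0 * x + (-(7/144)) * x ^ 2 + 0 * x ^ 3 + (1/576) * x ^ 4
              + 0 * x ^ 5) := by
          rw [integral_poly]; norm_num
      _ ≤ ∫ x in (0:ℝ)..2, F x := by
          rw [intervalIntegral.integral_of_le (by norm_num : (0:ℝ) ≤ 2),
            intervalIntegral.integral_of_le (by norm_num : (0:ℝ) ≤ 2)]
          apply MeasureTheory.setIntegral_mono_on
          · exact (Continuous.integrableOn_Ioc (by fun_prop))
          · exact hIntOn.mono_set (Set.Ioc_subset_Ioc_right (by linarith))
          · exact measurableSet_Ioc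
          · exact hpt
  -- Part B : ∫₂^π F ≥ 0
  have hB : (0:ℝ) ≤ ∫ x in (2:ℝ)..π, F x := by
    apply intervalIntegral.integral_nonneg (by linarith : (2:ℝ) ≤ π)
    rintro x ⟨hx2, hxπ⟩
    simp only [hF]
    apply div_nonneg _ (by positivity)
    exact mul_nonneg (Real.sqrt_nonneg _) (g_nonneg (by linarith) hxπ)
  -- Part C : ∫_π^{3π/2} F ≥ -(1/(2π²) + 11/192)
  have hC : -(1/(2*π^2) + 11/192 : ℝ) ≤ ∫ x in π..(3*π/2), F x := by
    have hpt : ∀ x ∈ Set.Icc π (3*π/2),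
        (4*π/π^4 : ℝ) + (-((4+π^2)/π^4)) * x + (2*π/π^4) * x ^ 2 + (-(1/π^4)) * x ^ 3
          + 0 * x ^ 4 + 0 * x ^ 5 ≤ F x := by
      rintro x ⟨hxl, hxr⟩
      have hxnn : (0:ℝ) ≤ x := by linarith
      have hx2π : x ≤ 2 * π := by linarith
      have hs0 : 0 ≤ Real.sin (x / 2) :=
        Real.sin_nonneg_of_nonneg_of_le_pi (by linarith) (by linarith)
      have hs1 : Real.sin (x / 2) ≤ 1 := Real.sin_le_one _
      -- bound for -sin x
      have hsinx : -Real.sin x ≤ x - π := by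
        have h1 : Real.sin (x - π) = -Real.sin x := by
          rw [show x - π = -(π - x) by ring, Real.sin_neg, Real.sin_pi_sub]
        have h2 := Real.sin_le (show (0:ℝ) ≤ x - π by linarith)
        linarith [h1 ▸ h2]
      -- bound for 1 + cos x
      have hcosx : 1 + Real.cos x ≤ (x - π) ^ 2 / 2 := by
        have h1 : Real.cos (x - π) = -Real.cos x := by
          rw [show x - π = -(π - x) by ring, Real.cos_neg, Real.cos_pi_sub]
        have h2 := Real.one_sub_sq_div_two_le_cos (x := x - π)
        rw [h1] at h2
        linarith
      obtain ⟨M, hM⟩ : ∃ M : ℝ, M = 2*(x - π) + x*(x - π)^2/2 := ⟨_, rfl⟩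
      have hM0 : 0 ≤ M := by
        rw [hM]
        have : 0 ≤ x * (x - π)^2 := by positivity
        nlinarith
      have hgM : -M ≤ 2*Real.sin x - x*Real.cos x - x := by
        have h3 := mul_le_mul_of_nonneg_left hcosx hxnn
        rw [hM]
        nlinarith
      have hprod : -(2 * M) ≤ 2 * Real.sin (x / 2) * (2*Real.sin x - x*Real.cos x - x) := by
        have h1 : 2 * Real.sin (x / 2) * (-M)
            ≤ 2 * Real.sin (x / 2) * (2*Real.sin x - x*Real.cos x - x) :=
          mul_le_mul_of_nonneg_left hgM (by linarith)
        have h2 : 2 * Real.sin (x / 2) * M ≤ 2 * M :=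
          mul_le_mul_of_nonneg_right (by linarith) hM0
        nlinarith
      have hFx : F x = 2 * Real.sin (x / 2) * (2*Real.sin x - x*Real.cos x - x) / x ^ 4 := by
        simp only [hF]; rw [sqrt_eq hxnn hx2π]
      have hx4 : (0:ℝ) < x ^ 4 := by
        have hx0' : (0:ℝ) < x := lt_of_lt_of_le hπpos hxl
        positivity
      have k1 : -(2 * M) / x ^ 4
          ≤ 2 * Real.sin (x / 2) * (2*Real.sin x - x*Real.cos x - x) / x ^ 4 :=
        (div_le_div_iff_of_pos_right hx4).mpr hprod
      have k2 : -(2 * M) / π ^ 4 ≤ -(2 * M) / x ^ 4 := by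
        have h2M : (0:ℝ) ≤ 2 * M := by linarith
        have hpow : π ^ 4 ≤ x ^ 4 := pow_le_pow_left₀ hπpos.le hxl 4
        rw [neg_div, neg_div, neg_le_neg_iff]
        gcongr
      have k3 : (4*π/π^4 : ℝ) + (-((4+π^2)/π^4)) * x + (2*π/π^4) * x ^ 2 + (-(1/π^4)) * x ^ 3
          + 0 * x ^ 4 + 0 * x ^ 5 = -(2 * M) / π ^ 4 := by
        rw [hM]
        field_simp
        ring
      rw [hFx, k3]
      linarith
    calc -(1/(2*π^2) + 11/192 : ℝ)
        = ∫ x in π..(3*π/2),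
            ((4*π/π^4 : ℝ) + (-((4+π^2)/π^4)) * x + (2*π/π^4) * x ^ 2 + (-(1/π^4)) * x ^ 3
              + 0 * x ^ 4 + 0 * x ^ 5) := by
          rw [integral_poly]
          field_simp
          ring
      _ ≤ ∫ x in π..(3*π/2), F x := by
          apply intervalIntegral.integral_mono_on (by linarith : π ≤ 3*π/2)
            (Continuous.intervalIntegrable (by fun_prop) _ _)
            (hsub π (3*π/2) hπpos.le (by linarith) (by linarith)) hpt
  -- Part D : ∫_{3π/2}^{2π} F ≥ -(8/(243π) + 47π/4860)
  have hD : -(8/(243*π) + 47*π/4860 : ℝ) ≤ ∫ x in (3*π/2)..(2*π), F x := by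
    have hpt : ∀ x ∈ Set.Icc (3*π/2) (2*π),
        (64*π^2/(81*π^4) : ℝ) + (-((96*π+16*π^3)/(81*π^4))) * x
          + ((32+40*π^2)/(81*π^4)) * x ^ 2 + (-(32*π/(81*π^4))) * x ^ 3
          + (8/(81*π^4)) * x ^ 4 + 0 * x ^ 5 ≤ F x := by
      rintro x ⟨hxl, hxr⟩
      have hxnn : (0:ℝ) ≤ x := by linarith
      have hxπ : π ≤ x := by linarith
      have hs0 : 0 ≤ Real.sin (x / 2) :=
        Real.sin_nonneg_of_nonneg_of_le_pi (by linarith) (by linarith)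
      have hsup : 2 * Real.sin (x / 2) ≤ 2*π - x := by
        have h1 : Real.sin (x / 2) = Real.sin (π - x / 2) := (Real.sin_pi_sub _).symm
        have h2 := Real.sin_le (show (0:ℝ) ≤ π - x / 2 by linarith)
        rw [h1]
        linarith
      have hsinx : -Real.sin x ≤ x - π := by
        have h1 : Real.sin (x - π) = -Real.sin x := by
          rw [show x - π = -(π - x) by ring, Real.sin_neg, Real.sin_pi_sub]
        have h2 := Real.sin_le (show (0:ℝ) ≤ x - π by linarith)
        linarith [h1 ▸ h2]
      have hcosx : 1 + Real.cos x ≤ (x - π) ^ 2 / 2 := by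
        have h1 : Real.cos (x - π) = -Real.cos x := by
          rw [show x - π = -(π - x) by ring, Real.cos_neg, Real.cos_pi_sub]
        have h2 := Real.one_sub_sq_div_two_le_cos (x := x - π)
        rw [h1] at h2
        linarith
      obtain ⟨M, hM⟩ : ∃ M : ℝ, M = 2*(x - π) + x*(x - π)^2/2 := ⟨_, rfl⟩
      have hM0 : 0 ≤ M := by
        rw [hM]
        have : 0 ≤ x * (x - π)^2 := by positivity
        nlinarith
      have hgM : -M ≤ 2*Real.sin x - x*Real.cos x - x := by
        have h3 := mul_le_mul_of_nonneg_left hcosx hxnn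
        rw [hM]
        nlinarith
      have hprod : -((2*π - x) * M)
          ≤ 2 * Real.sin (x / 2) * (2*Real.sin x - x*Real.cos x - x) := by
        have h1 : 2 * Real.sin (x / 2) * (-M)
            ≤ 2 * Real.sin (x / 2) * (2*Real.sin x - x*Real.cos x - x) :=
          mul_le_mul_of_nonneg_left hgM (by linarith)
        have h2 : 2 * Real.sin (x / 2) * M ≤ (2*π - x) * M :=
          mul_le_mul_of_nonneg_right hsup hM0
        nlinarith
      have hFx : F x = 2 * Real.sin (x / 2) * (2*Real.sin x - x*Real.cos x - x) / x ^ 4 := by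
        simp only [hF]; rw [sqrt_eq hxnn (by linarith)]
      have hx4 : (0:ℝ) < x ^ 4 := by
        have hx0' : (0:ℝ) < x := lt_of_lt_of_le hπpos hxπ
        positivity
      have k1 : -((2*π - x) * M) / x ^ 4
          ≤ 2 * Real.sin (x / 2) * (2*Real.sin x - x*Real.cos x - x) / x ^ 4 :=
        (div_le_div_iff_of_pos_right hx4).mpr hprod
      have hMx0 : 0 ≤ (2*π - x) * M := mul_nonneg (by linarith) hM0
      have k2 : -((2*π - x) * M) / (3*π/2) ^ 4 ≤ -((2*π - x) * M) / x ^ 4 := by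
        have hpow : (3*π/2) ^ 4 ≤ x ^ 4 := pow_le_pow_left₀ (by linarith) hxl 4
        rw [neg_div, neg_div, neg_le_neg_iff]
        gcongr
      have k3 : (64*π^2/(81*π^4) : ℝ) + (-((96*π+16*π^3)/(81*π^4))) * x
          + ((32+40*π^2)/(81*π^4)) * x ^ 2 + (-(32*π/(81*π^4))) * x ^ 3
          + (8/(81*π^4)) * x ^ 4 + 0 * x ^ 5 = -((2*π - x) * M) / (3*π/2) ^ 4 := by
        rw [hM]
        field_simp
        ring
      rw [hFx, k3]
      linarith
    calc -(8/(243*π) + 47*π/4860 : ℝ)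
        = ∫ x in (3*π/2)..(2*π),
            ((64*π^2/(81*π^4) : ℝ) + (-((96*π+16*π^3)/(81*π^4))) * x
              + ((32+40*π^2)/(81*π^4)) * x ^ 2 + (-(32*π/(81*π^4))) * x ^ 3
              + (8/(81*π^4)) * x ^ 4 + 0 * x ^ 5) := by
          rw [integral_poly]
          field_simp
          ring
      _ ≤ ∫ x in (3*π/2)..(2*π), F x := by
          apply intervalIntegral.integral_mono_on (by linarith : 3*π/2 ≤ 2*π)
            (Continuous.intervalIntegrable (by fun_prop) _ _)
            (hsub (3*π/2) (2*π) (by linarith) (by linarith) le_rfl) hpt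
  -- assemble
  have s1 : (∫ x in (0:ℝ)..2, F x) + (∫ x in (2:ℝ)..π, F x) = ∫ x in (0:ℝ)..π, F x :=
    intervalIntegral.integral_add_adjacent_intervals
      (hsub 0 2 le_rfl (by norm_num) (by linarith))
      (hsub 2 π (by norm_num) (by linarith) (by linarith))
  have s2 : (∫ x in π..(3*π/2), F x) + (∫ x in (3*π/2)..(2*π), F x)
      = ∫ x in π..(2*π), F x :=
    intervalIntegral.integral_add_adjacent_intervals
      (hsub π (3*π/2) hπpos.le (by linarith) (by linarith))
      (hsub (3*π/2) (2*π) (by linarith) (by linarith) le_rfl)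
  have s3 : (∫ x in (0:ℝ)..π, F x) + (∫ x in π..(2*π), F x) = ∫ x in (0:ℝ)..(2*π), F x :=
    intervalIntegral.integral_add_adjacent_intervals
      (hsub 0 π le_rfl hπpos.le (by linarith))
      (hsub π (2*π) hπpos.le (by linarith) le_rfl)
  -- numeric bounds
  have b1 : (1/(2*π^2) : ℝ) < 51/1000 := by
    rw [div_lt_iff₀ (by positivity)]
    nlinarith
  have b2 : (8/(243*π) : ℝ) < 11/1000 := by
    rw [div_lt_iff₀ (by positivity)]
    nlinarith
  have b3 : (47*π/4860 : ℝ) < 31/1000 := by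
    rw [div_lt_iff₀ (by norm_num : (0:ℝ) < 4860)]
    nlinarith
  have b4 : (11/192 : ℝ) ≤ 58/1000 := by norm_num
  have hgoal : (0:ℝ) < ∫ x in (0:ℝ)..(2*π), F x := by
    rw [← s3, ← s1, ← s2]
    have : (29/135 : ℝ) - (51/1000 + 58/1000) - (11/1000 + 31/1000) > 0 := by norm_num
    linarith
  exact hgoal
end

section
/- The integral ∫₀^{3π/2} √((2−2cos φ)/φ² − 8/(9π²))·(2 sin φ − φ cos φ − φ)/φ³ dφ is strictly positive. -/
open Real


lemma mono_aux {f f' : ℝ → ℝ} (hd : ∀ y, HasDerivAt f (f' y) y)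
    (h0 : ∀ y, 0 ≤ y → 0 ≤ f' y) {x : ℝ} (hx : 0 ≤ x) : f 0 ≤ f x := by
  have hmono : MonotoneOn f (Set.Ici 0) := by
    apply monotoneOn_of_deriv_nonneg (convex_Ici 0)
    · exact fun y _ => (hd y).continuousAt.continuousWithinAt
    · exact fun y _ => (hd y).differentiableAt.differentiableWithinAt
    · intro y hy
      rw [(hd y).deriv]
      have hy' : (0:ℝ) < y := by simpa [interior_Ici] using hy
      exact h0 y hy'.le
  exact hmono Set.self_mem_Ici hx hx

lemma sin_lb {x : ℝ} (hx : 0 ≤ x) : x - x^3/6 ≤ Real.sin x := by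
  have h := mono_aux (f := fun t => Real.sin t - (t - t^3/6))
    (f' := fun t => Real.cos t - (1 - t^2/2)) ?_ ?_ hx
  · simpa using h
  · intro y
    have h1 := (Real.hasDerivAt_sin y).sub ((hasDerivAt_id y).sub ((hasDerivAt_pow 3 y).div_const 6))
    refine h1.congr_deriv ?_
    norm_num
    ring
  · intro y _
    have := Real.one_sub_sq_div_two_le_cos (x := y)
    linarith

lemma cos_ub_nonneg {x : ℝ} (hx : 0 ≤ x) : Real.cos x ≤ 1 - x^2/2 + x^4/24 := by
  have h := mono_aux (f := fun t => (1 - t^2/2 + t^4/24) - Real.cos t)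
    (f' := fun t => Real.sin t - (t - t^3/6)) ?_ ?_ hx
  · simpa using h
  · intro y
    have h1 := (((hasDerivAt_const y (1:ℝ)).sub (((hasDerivAt_pow 2 y)).div_const 2)).add
        ((hasDerivAt_pow 4 y).div_const 24)).sub (Real.hasDerivAt_cos y)
    refine h1.congr_deriv ?_
    norm_num
    ring
  · intro y hy
    have := sin_lb hy
    linarith

lemma cos_ub (x : ℝ) : Real.cos x ≤ 1 - x^2/2 + x^4/24 := by
  rcases le_total 0 x with hx | hx
  · exact cos_ub_nonneg hx
  · have h := cos_ub_nonneg (neg_nonneg.2 hx)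
    rw [Real.cos_neg] at h
    convert h using 2 <;> ring


noncomputable def Fi : ℝ → ℝ := fun φ =>
  Real.sqrt ((2 - 2*Real.cos φ)/φ^2 - 8/(9*π^2)) *
    (2*Real.sin φ - φ*Real.cos φ - φ) / φ^3

lemma f_cubic_lb {φ : ℝ} (hφ : 0 ≤ φ) :
    φ^3/6 - φ^5/24 ≤ 2*Real.sin φ - φ*Real.cos φ - φ := by
  have h1 := sin_lb hφ
  have h2 := mul_le_mul_of_nonneg_left (cos_ub φ) hφ
  nlinarith

lemma f_nonneg {φ : ℝ} (h0 : 0 ≤ φ) (hπ : φ ≤ π) :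
    0 ≤ 2*Real.sin φ - φ*Real.cos φ - φ := by
  have hs : Real.sin φ = 2 * Real.sin (φ/2) * Real.cos (φ/2) := by
    rw [show φ = 2*(φ/2) by ring, Real.sin_two_mul]; ring_nf
  have hc : Real.cos φ = 2 * Real.cos (φ/2)^2 - 1 := by
    rw [show φ = 2*(φ/2) by ring, Real.cos_two_mul]; ring_nf
  have hcn : 0 ≤ Real.cos (φ/2) :=
    Real.cos_nonneg_of_mem_Icc ⟨by linarith [Real.pi_pos], by linarith⟩
  have key : φ * Real.cos (φ/2) ≤ 2 * Real.sin (φ/2) := by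
    rcases eq_or_lt_of_le hcn with hc0 | hc0
    · rw [← hc0]
      have : 0 ≤ Real.sin (φ/2) :=
        Real.sin_nonneg_of_nonneg_of_le_pi (by linarith) (by linarith [Real.pi_pos])
      linarith
    · have h2 : φ/2 < π/2 := by
        by_contra hh
        push_neg at hh
        have := Real.cos_nonpos_of_pi_div_two_le_of_le hh (by linarith [Real.pi_pos])
        linarith
      have ht := Real.le_tan (by linarith) h2
      rw [Real.tan_eq_sin_div_cos] at ht
      have := (le_div_iff₀ hc0).mp ht
      linarith
  nlinarith [mul_le_mul_of_nonneg_right key hcn, sq_nonneg (Real.cos (φ/2))]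

lemma Fi_nonneg {φ : ℝ} (h0 : 0 ≤ φ) (hπ : φ ≤ π) : 0 ≤ Fi φ := by
  rcases eq_or_lt_of_le h0 with h | h
  · simp [Fi, ← h]
  · exact div_nonneg (mul_nonneg (Real.sqrt_nonneg _) (f_nonneg h0 hπ)) (by positivity)

lemma Fi_integrable : IntervalIntegrable Fi MeasureTheory.volume 0 (3*π/2) := by
  rw [intervalIntegrable_iff]
  rw [Set.uIoc_of_le (by positivity)]
  apply MeasureTheory.Integrable.mono' (g := fun _ => (5:ℝ)/6)
  · exact MeasureTheory.integrableOn_const measure_Ioc_lt_top.ne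
  · apply Measurable.aestronglyMeasurable
    unfold Fi
    fun_prop
  · filter_upwards [MeasureTheory.ae_restrict_mem measurableSet_Ioc] with φ hφ
    obtain ⟨h0, h32⟩ := hφ
    have hπ := Real.pi_gt_d6
    have hπ' := Real.pi_lt_d6
    have hsqrt : Real.sqrt ((2 - 2*Real.cos φ)/φ^2 - 8/(9*π^2)) ≤ 1 := by
      apply Real.sqrt_le_one.mpr
      have h1 : 2 - 2*Real.cos φ ≤ φ^2 := by
        have := Real.one_sub_sq_div_two_le_cos (x := φ)
        linarith
      have h2 : (2 - 2*Real.cos φ)/φ^2 ≤ 1 := by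
        rw [div_le_one (by positivity)]
        exact h1
      have : 0 < 8/(9*π^2) := by positivity
      linarith
    have hfub : 2*Real.sin φ - φ*Real.cos φ - φ ≤ 5*φ^3/6 := by
      have h1 := Real.sin_le h0.le
      have h2 := Real.one_sub_sq_div_two_le_cos (x := φ)
      nlinarith
    have hflb : -(5*φ^3/6) ≤ 2*Real.sin φ - φ*Real.cos φ - φ := by
      have h1 := f_cubic_lb h0.le
      have h2 : φ^2 ≤ 23 := by nlinarith
      have h3 := mul_le_mul_of_nonneg_left h2 (pow_pos h0 3).le
      nlinarith [pow_pos h0 3]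
    have habs : |2*Real.sin φ - φ*Real.cos φ - φ| ≤ 5*φ^3/6 := abs_le.2 ⟨hflb, hfub⟩
    have : ‖Fi φ‖ = Real.sqrt ((2 - 2*Real.cos φ)/φ^2 - 8/(9*π^2)) *
        |2*Real.sin φ - φ*Real.cos φ - φ| / φ^3 := by
      rw [Fi]
      rw [Real.norm_eq_abs, abs_div, abs_mul, abs_of_nonneg (Real.sqrt_nonneg _),
        abs_of_pos (by positivity : (0:ℝ) < φ^3)]
    rw [this]
    rw [div_le_iff₀ (by positivity : (0:ℝ) < φ^3)]
    calc Real.sqrt ((2 - 2*Real.cos φ)/φ^2 - 8/(9*π^2)) * |2*Real.sin φ - φ*Real.cos φ - φ|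
        ≤ 1 * (5*φ^3/6) := mul_le_mul hsqrt habs (abs_nonneg _) (by norm_num)
      _ = 5/6 * φ^3 := by ring


lemma K_ub : 8/(9*π^2) ≤ 901/10000 := by
  rw [div_le_div_iff₀ (by positivity) (by norm_num)]
  nlinarith [Real.pi_gt_d6]

lemma Fi_piece_lb {a b s : ℝ} (ha : 0 < a) (hab : a < b) (hb : b ≤ 9/5)
    (hs : 0 ≤ s) (hs2 : s^2 ≤ (a^2 - a^4/12)/b^2 - 901/10000) :
    ∀ φ ∈ Set.Icc a b, s * (1/6 - b^2/24) ≤ Fi φ := by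
  intro φ hφ
  obtain ⟨hφa, hφb⟩ := hφ
  have hφ0 : 0 < φ := lt_of_lt_of_le ha hφa
  have hπ6 := Real.pi_gt_d6
  have hφπ : φ ≤ π := by linarith
  have hcos : Real.cos φ ≤ Real.cos a :=
    Real.cos_le_cos_of_nonneg_of_le_pi ha.le hφπ hφa
  have hca := cos_ub a
  have harg : s^2 ≤ (2 - 2*Real.cos φ)/φ^2 - 8/(9*π^2) := by
    have h1 : (a^2 - a^4/12)/b^2 ≤ (2 - 2*Real.cos φ)/φ^2 := by
      apply div_le_div₀ (by nlinarith [Real.cos_le_one φ]) (by nlinarith) (by positivity)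
        (by nlinarith)
    linarith [K_ub]
  have hsqrt : s ≤ Real.sqrt ((2 - 2*Real.cos φ)/φ^2 - 8/(9*π^2)) := by
    calc s = Real.sqrt (s^2) := (Real.sqrt_sq hs).symm
      _ ≤ _ := Real.sqrt_le_sqrt harg
  have hf : φ^3 * (1/6 - φ^2/24) ≤ 2*Real.sin φ - φ*Real.cos φ - φ := by
    have := f_cubic_lb hφ0.le
    nlinarith
  have hφ2 : φ^2 ≤ 4 := by nlinarith
  have hfpos : 0 ≤ φ^3 * (1/6 - φ^2/24) := by
    nlinarith [mul_le_mul_of_nonneg_left hφ2 (pow_pos hφ0 3).le]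
  rw [Fi]
  rw [le_div_iff₀ (by positivity : (0:ℝ) < φ^3)]
  calc s * (1/6 - b^2/24) * φ^3 ≤ s * (φ^3 * (1/6 - φ^2/24)) := by
        have hb2 : φ^2 ≤ b^2 := by nlinarith
        nlinarith [mul_nonneg (mul_nonneg hs (pow_pos hφ0 3).le) (sub_nonneg.2 hb2)]
    _ ≤ _ := mul_le_mul hsqrt hf hfpos (Real.sqrt_nonneg _)

lemma Fi_neg_lb : ∀ φ ∈ Set.Icc π (3*π/2),
    -(Real.sqrt 28 / (3*π^4) * (φ + φ*Real.cos φ - 2*Real.sin φ)) ≤ Fi φ := by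
  intro φ hφ
  obtain ⟨hφπ, hφ32⟩ := hφ
  have hπ := Real.pi_pos
  have hφ0 : 0 < φ := lt_of_lt_of_le hπ hφπ
  have hsin : Real.sin φ ≤ 0 := by
    have h1 : Real.sin ((φ - π) + π) = -Real.sin (φ - π) := Real.sin_add_pi _
    have h2 : 0 ≤ Real.sin (φ - π) :=
      Real.sin_nonneg_of_nonneg_of_le_pi (by linarith) (by linarith)
    rw [show φ = (φ - π) + π by ring, h1]
    linarith
  have hg : 0 ≤ φ + φ*Real.cos φ - 2*Real.sin φ := by
    nlinarith [Real.neg_one_le_cos φ]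
  have hargub : (2 - 2*Real.cos φ)/φ^2 - 8/(9*π^2) ≤ 28/(9*π^2) := by
    have h1 : (2 - 2*Real.cos φ)/φ^2 ≤ 4/π^2 :=
      div_le_div₀ (by positivity) (by nlinarith [Real.neg_one_le_cos φ]) (by positivity)
        (by nlinarith)
    have h2 : 4/π^2 - 8/(9*π^2) = 28/(9*π^2) := by field_simp; ring
    linarith
  have hsq28 : (Real.sqrt 28 / (3*π))^2 = 28/(9*π^2) := by
    rw [div_pow, Real.sq_sqrt (by norm_num : (28:ℝ) ≥ 0)]
    ring_nf
  have hsqrt : Real.sqrt ((2 - 2*Real.cos φ)/φ^2 - 8/(9*π^2)) ≤ Real.sqrt 28 / (3*π) := by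
    calc Real.sqrt ((2 - 2*Real.cos φ)/φ^2 - 8/(9*π^2))
        ≤ Real.sqrt ((Real.sqrt 28 / (3*π))^2) := Real.sqrt_le_sqrt (by rw [hsq28]; exact hargub)
      _ = Real.sqrt 28 / (3*π) := Real.sqrt_sq (by positivity)
  have key : Real.sqrt ((2 - 2*Real.cos φ)/φ^2 - 8/(9*π^2)) * (φ + φ*Real.cos φ - 2*Real.sin φ) / φ^3
      ≤ Real.sqrt 28 / (3*π^4) * (φ + φ*Real.cos φ - 2*Real.sin φ) := by
    have h1 : Real.sqrt ((2 - 2*Real.cos φ)/φ^2 - 8/(9*π^2)) * (φ + φ*Real.cos φ - 2*Real.sin φ)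
        ≤ Real.sqrt 28 / (3*π) * (φ + φ*Real.cos φ - 2*Real.sin φ) :=
      mul_le_mul_of_nonneg_right hsqrt hg
    have h2 : Real.sqrt ((2 - 2*Real.cos φ)/φ^2 - 8/(9*π^2)) * (φ + φ*Real.cos φ - 2*Real.sin φ) / φ^3
        ≤ Real.sqrt 28 / (3*π) * (φ + φ*Real.cos φ - 2*Real.sin φ) / π^3 :=
      div_le_div₀ (by positivity) h1 (by positivity) (pow_le_pow_left₀ hπ.le hφπ 3)
    calc _ ≤ Real.sqrt 28 / (3*π) * (φ + φ*Real.cos φ - 2*Real.sin φ) / π^3 := h2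
      _ = Real.sqrt 28 / (3*π^4) * (φ + φ*Real.cos φ - 2*Real.sin φ) := by
          rw [div_mul_eq_mul_div, div_div, div_mul_eq_mul_div, div_eq_div_iff (by positivity) (by positivity)]
          ring
  have hFi : Fi φ = -(Real.sqrt ((2 - 2*Real.cos φ)/φ^2 - 8/(9*π^2)) *
      (φ + φ*Real.cos φ - 2*Real.sin φ) / φ^3) := by
    rw [Fi]; ring
  rw [hFi]
  linarith

lemma g_integral : (∫ φ in π..(3*π/2), (φ + φ*Real.cos φ - 2*Real.sin φ)) =
    5*π^2/8 - 3*π/2 + 3 := by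
  have h : ∀ φ ∈ Set.uIcc π (3*π/2),
      HasDerivAt (fun t : ℝ => t^2/2 + t*Real.sin t + 3*Real.cos t)
        (φ + φ*Real.cos φ - 2*Real.sin φ) φ := by
    intro φ _
    have h1 := (((hasDerivAt_pow 2 φ).div_const 2).add
      ((hasDerivAt_id φ).mul (Real.hasDerivAt_sin φ))).add ((Real.hasDerivAt_cos φ).const_mul 3)
    refine h1.congr_deriv ?_
    · norm_num
      ring
  rw [intervalIntegral.integral_eq_sub_of_hasDerivAt h (by apply Continuous.intervalIntegrable; continuity)]
  have h32 : (3*π/2) = π/2 + π := by ring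
  rw [h32, Real.sin_add_pi, Real.cos_add_pi, Real.sin_pi_div_two, Real.cos_pi_div_two,
    Real.sin_pi, Real.cos_pi]
  ring


set_option maxHeartbeats 1000000 in
/-- The integral `∫₀^{3π/2} √((2−2cos φ)/φ² − 8/(9π²))·(2 sin φ − φ cos φ − φ)/φ³ dφ`
is strictly positive. -/
theorem integral_slice1_pos :
    0 < ∫ φ in (0:ℝ)..(3*π/2),
        Real.sqrt ((2 - 2*Real.cos φ)/φ^2 - 8/(9*π^2)) *
          (2*Real.sin φ - φ*Real.cos φ - φ) / φ^3 := by
  show 0 < ∫ φ in (0:ℝ)..(3*π/2), Fi φ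
  have hπ6 := Real.pi_gt_d6
  have hπ6' := Real.pi_lt_d6
  have hπ0 := Real.pi_pos
  have hsub : ∀ c d : ℝ, 0 ≤ c → c ≤ d → d ≤ 3*π/2 →
      IntervalIntegrable Fi MeasureTheory.volume c d := by
    intro c d hc hcd hd
    apply Fi_integrable.mono_set
    rw [Set.uIcc_of_le hcd, Set.uIcc_of_le (by positivity : (0:ℝ) ≤ 3*π/2)]
    exact Set.Icc_subset_Icc hc hd
  have hpiece : ∀ a b s : ℝ, 0 < a → a < b → b ≤ 9/5 → 0 ≤ s →
      s^2 ≤ (a^2 - a^4/12)/b^2 - 901/10000 →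
      s * (1/6 - b^2/24) * (b - a) ≤ ∫ φ in a..b, Fi φ := by
    intro a b s ha hab hb hs hs2
    have h := intervalIntegral.integral_mono_on (μ := MeasureTheory.volume) (a := a) (b := b)
      (f := fun _ => s * (1/6 - b^2/24)) (g := Fi) hab.le
      intervalIntegrable_const (hsub a b ha.le hab.le (by linarith))
      (Fi_piece_lb ha hab hb hs hs2)
    rwa [intervalIntegral.integral_const, smul_eq_mul, mul_comm] at h
  have h1 := hpiece (1/5) (2/5) (997/2500) (by norm_num) (by norm_num) (by norm_num)
    (by norm_num) (by norm_num)
  have h2 := hpiece (2/5) (3/5) (2951/5000) (by norm_num) (by norm_num) (by norm_num)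
    (by norm_num) (by norm_num)
  have h3 := hpiece (3/5) (4/5) (6749/10000) (by norm_num) (by norm_num) (by norm_num)
    (by norm_num) (by norm_num)
  have h4 := hpiece (4/5) 1 (7181/10000) (by norm_num) (by norm_num) (by norm_num)
    (by norm_num) (by norm_num)
  have h5 := hpiece 1 (6/5) (462/625) (by norm_num) (by norm_num) (by norm_num)
    (by norm_num) (by norm_num)
  have h6 := hpiece (6/5) (7/5) (7459/10000) (by norm_num) (by norm_num) (by norm_num)
    (by norm_num) (by norm_num)
  have h7 := hpiece (7/5) (8/5) (7419/10000) (by norm_num) (by norm_num) (by norm_num)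
    (by norm_num) (by norm_num)
  have h8 := hpiece (8/5) (9/5) (729/1000) (by norm_num) (by norm_num) (by norm_num)
    (by norm_num) (by norm_num)
  norm_num at h1 h2 h3 h4 h5 h6 h7 h8
  have h0a : 0 ≤ ∫ φ in (0:ℝ)..(1/5), Fi φ :=
    intervalIntegral.integral_nonneg (by norm_num)
      (fun u hu => Fi_nonneg hu.1 (by linarith [hu.2]))
  have h9π : 0 ≤ ∫ φ in (9/5:ℝ)..π, Fi φ :=
    intervalIntegral.integral_nonneg (by linarith)
      (fun u hu => Fi_nonneg (by linarith [hu.1]) hu.2)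
  -- chain of splittings
  have hs0 : (0:ℝ) ≤ 1/5 := by norm_num
  have hend : (9:ℝ)/5 ≤ 3*π/2 := by linarith
  have e1 : (∫ φ in (0:ℝ)..(2/5), Fi φ) =
      (∫ φ in (0:ℝ)..(1/5), Fi φ) + ∫ φ in (1/5:ℝ)..(2/5), Fi φ :=
    (intervalIntegral.integral_add_adjacent_intervals
      (hsub 0 (1/5) (by norm_num) (by norm_num) (by linarith))
      (hsub (1/5) (2/5) (by norm_num) (by norm_num) (by linarith))).symm
  have e2 : (∫ φ in (0:ℝ)..(3/5), Fi φ) =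
      (∫ φ in (0:ℝ)..(2/5), Fi φ) + ∫ φ in (2/5:ℝ)..(3/5), Fi φ :=
    (intervalIntegral.integral_add_adjacent_intervals
      (hsub 0 (2/5) (by norm_num) (by norm_num) (by linarith))
      (hsub (2/5) (3/5) (by norm_num) (by norm_num) (by linarith))).symm
  have e3 : (∫ φ in (0:ℝ)..(4/5), Fi φ) =
      (∫ φ in (0:ℝ)..(3/5), Fi φ) + ∫ φ in (3/5:ℝ)..(4/5), Fi φ :=
    (intervalIntegral.integral_add_adjacent_intervals
      (hsub 0 (3/5) (by norm_num) (by norm_num) (by linarith))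
      (hsub (3/5) (4/5) (by norm_num) (by norm_num) (by linarith))).symm
  have e4 : (∫ φ in (0:ℝ)..(1:ℝ), Fi φ) =
      (∫ φ in (0:ℝ)..(4/5), Fi φ) + ∫ φ in (4/5:ℝ)..(1:ℝ), Fi φ :=
    (intervalIntegral.integral_add_adjacent_intervals
      (hsub 0 (4/5) (by norm_num) (by norm_num) (by linarith))
      (hsub (4/5) 1 (by norm_num) (by norm_num) (by linarith))).symm
  have e5 : (∫ φ in (0:ℝ)..(6/5), Fi φ) =
      (∫ φ in (0:ℝ)..(1:ℝ), Fi φ) + ∫ φ in (1:ℝ)..(6/5), Fi φ :=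
    (intervalIntegral.integral_add_adjacent_intervals
      (hsub 0 1 (by norm_num) (by norm_num) (by linarith))
      (hsub 1 (6/5) (by norm_num) (by norm_num) (by linarith))).symm
  have e6 : (∫ φ in (0:ℝ)..(7/5), Fi φ) =
      (∫ φ in (0:ℝ)..(6/5), Fi φ) + ∫ φ in (6/5:ℝ)..(7/5), Fi φ :=
    (intervalIntegral.integral_add_adjacent_intervals
      (hsub 0 (6/5) (by norm_num) (by norm_num) (by linarith))
      (hsub (6/5) (7/5) (by norm_num) (by norm_num) (by linarith))).symm
  have e7 : (∫ φ in (0:ℝ)..(8/5), Fi φ) =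
      (∫ φ in (0:ℝ)..(7/5), Fi φ) + ∫ φ in (7/5:ℝ)..(8/5), Fi φ :=
    (intervalIntegral.integral_add_adjacent_intervals
      (hsub 0 (7/5) (by norm_num) (by norm_num) (by linarith))
      (hsub (7/5) (8/5) (by norm_num) (by norm_num) (by linarith))).symm
  have e8 : (∫ φ in (0:ℝ)..(9/5), Fi φ) =
      (∫ φ in (0:ℝ)..(8/5), Fi φ) + ∫ φ in (8/5:ℝ)..(9/5), Fi φ :=
    (intervalIntegral.integral_add_adjacent_intervals
      (hsub 0 (8/5) (by norm_num) (by norm_num) (by linarith))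
      (hsub (8/5) (9/5) (by norm_num) (by norm_num) (by linarith))).symm
  have e9 : (∫ φ in (0:ℝ)..π, Fi φ) =
      (∫ φ in (0:ℝ)..(9/5), Fi φ) + ∫ φ in (9/5:ℝ)..π, Fi φ :=
    (intervalIntegral.integral_add_adjacent_intervals
      (hsub 0 (9/5) (by norm_num) (by norm_num) (by linarith))
      (hsub (9/5) π (by norm_num) (by linarith) (by linarith))).symm
  -- negative part
  have hcont : Continuous (fun φ : ℝ =>
      -(Real.sqrt 28/(3*π^4) * (φ + φ*Real.cos φ - 2*Real.sin φ))) := by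
    apply Continuous.neg
    apply Continuous.mul continuous_const
    exact (continuous_id.add (continuous_id.mul Real.continuous_cos)).sub
      (continuous_const.mul Real.continuous_sin)
  have hneg : -(Real.sqrt 28/(3*π^4) * (5*π^2/8 - 3*π/2 + 3)) ≤
      ∫ φ in π..(3*π/2), Fi φ := by
    have h := intervalIntegral.integral_mono_on (μ := MeasureTheory.volume)
      (by linarith : π ≤ 3*π/2) (hcont.intervalIntegrable _ _)
      (hsub π (3*π/2) (by linarith) (by linarith) le_rfl) Fi_neg_lb
    rwa [intervalIntegral.integral_neg, intervalIntegral.integral_const_mul, g_integral] at h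
  have esplit : (∫ φ in (0:ℝ)..(3*π/2), Fi φ) =
      (∫ φ in (0:ℝ)..π, Fi φ) + ∫ φ in π..(3*π/2), Fi φ :=
    (intervalIntegral.integral_add_adjacent_intervals
      (hsub 0 π (by norm_num) (by linarith) (by linarith))
      (hsub π (3*π/2) (by linarith) (by linarith) le_rfl)).symm
  -- numeric finish
  have hS : Real.sqrt 28 ≤ 5.2916 := by
    rw [show (5.2916:ℝ) = Real.sqrt (5.2916^2) from (Real.sqrt_sq (by norm_num)).symm]
    exact Real.sqrt_le_sqrt (by norm_num)
  have hpi2 : (9.8696:ℝ) ≤ π^2 := by nlinarith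
  have hpi2' : π^2 ≤ 9.8697 := by nlinarith
  have hA : 5*π^2/8 - 3*π/2 + 3 ≤ 4.4562 := by nlinarith
  have hA0 : 0 ≤ 5*π^2/8 - 3*π/2 + 3 := by nlinarith
  have hp4 : (292:ℝ) ≤ 3*π^4 := by nlinarith
  have h1' : Real.sqrt 28/(3*π^4) ≤ 5.2916/292 :=
    div_le_div₀ (by norm_num) hS (by norm_num) hp4
  have hbound : Real.sqrt 28/(3*π^4) * (5*π^2/8 - 3*π/2 + 3) ≤ 5.2916/292 * 4.4562 :=
    mul_le_mul h1' hA hA0 (by norm_num)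
  have hnum : (5.2916:ℝ)/292 * 4.4562 < 102641/937500 := by norm_num
  rw [esplit]
  linarith [h0a, h9π, h1, h2, h3, h4, h5, h6, h7, h8, e1, e2, e3, e4, e5, e6, e7, e8, e9]
end

section
/- For every φ ∈ (0, 3π/2] one has (2−2cos φ)/φ² ≥ 8/(9π²), and equality holds at φ = 3π/2. Moreover the continuous extension at φ = 0 has value 1, so the inequality also holds (strictly) at 0 with value 1 ≥ 8/(9π²). -/
open Real

lemma sin_chord_lb {x : ℝ} (hx0 : 0 ≤ x) (hx1 : x ≤ 3*π/4) :
    Real.sqrt 2 / 2 * (x / (3*π/4)) ≤ Real.sin x := by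
  have hπ := Real.pi_pos
  have ha : 3*π/4 ∈ Set.Icc (0:ℝ) π := ⟨by positivity, by linarith⟩
  have h0 : (0:ℝ) ∈ Set.Icc (0:ℝ) π := ⟨le_refl _, le_of_lt hπ⟩
  have hb0 : 0 ≤ x / (3*π/4) := by positivity
  have hb1 : x / (3*π/4) ≤ 1 := by
    rw [div_le_one (by positivity)]; exact hx1
  have hcc := strictConcaveOn_sin_Icc.concaveOn
  have h := hcc.2 h0 ha (show (0:ℝ) ≤ 1 - x/(3*π/4) by linarith) hb0 (by ring)
  have hx : (1 - x/(3*π/4)) • (0:ℝ) + (x/(3*π/4)) • (3*π/4) = x := by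
    simp only [smul_eq_mul, mul_zero, zero_add]
    field_simp
  rw [hx] at h
  have hs : Real.sin (3*π/4) = Real.sqrt 2 / 2 := by
    have h34 : (3:ℝ)*π/4 = π - π/4 := by ring
    rw [h34, Real.sin_pi_sub, Real.sin_pi_div_four]
  rw [hs] at h
  simpa [smul_eq_mul, mul_comm] using h

lemma cos_half_identity (φ : ℝ) : Real.cos φ = 1 - 2 * Real.sin (φ/2)^2 := by
  have h1 := Real.cos_two_mul (φ/2)
  have h2 := Real.sin_sq_add_cos_sq (φ/2)
  have h3 : φ = 2*(φ/2) := by ring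
  conv_lhs => rw [h3, h1]
  linarith

/-- For every `φ ∈ (0, 3π/2]` one has `(2−2cos φ)/φ² ≥ 8/(9π²)`, with equality at
`φ = 3π/2`; moreover the continuous extension at `0` has value `1`, and `8/(9π²) < 1`. -/
theorem sq_dist_lower_bound :
    (∀ φ ∈ Set.Ioc (0:ℝ) (3*π/2), 8/(9*π^2) ≤ (2 - 2*Real.cos φ)/φ^2) ∧
    (2 - 2*Real.cos (3*π/2))/(3*π/2)^2 = 8/(9*π^2) ∧
    Filter.Tendsto (fun φ : ℝ => (2 - 2*Real.cos φ)/φ^2)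
      (nhdsWithin 0 (Set.Ioi 0)) (nhds 1) ∧
    8/(9*π^2) < 1 := by
  have hπ := Real.pi_pos
  have h2 : Real.sqrt 2 ^ 2 = 2 := Real.sq_sqrt (by norm_num)
  refine ⟨?_, ?_, ?_, ?_⟩
  · intro φ hφ
    obtain ⟨hφ0, hφ1⟩ := hφ
    have h := sin_chord_lb (x := φ/2) (by linarith) (by linarith)
    have hk : 0 ≤ Real.sqrt 2 / 2 * (φ/2 / (3*π/4)) := by positivity
    have hsq : (Real.sqrt 2 / 2 * (φ/2 / (3*π/4)))^2 ≤ Real.sin (φ/2)^2 :=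
      pow_le_pow_left₀ hk h 2
    have hk2 : (Real.sqrt 2 / 2 * (φ/2 / (3*π/4)))^2 = 2*φ^2/(9*π^2) := by
      rw [mul_pow, div_pow, div_pow, h2]
      field_simp; ring
    rw [hk2] at hsq
    rw [le_div_iff₀ (by positivity : (0:ℝ) < φ^2), cos_half_identity]
    have he : 8/(9*π^2)*φ^2 = 4*(2*φ^2/(9*π^2)) := by ring
    nlinarith [hsq]
  · have hc : Real.cos (3*π/2) = 0 := by
      have h32 : (3:ℝ)*π/2 = π + π/2 := by ring
      rw [h32, Real.cos_add]
      simp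
    rw [hc]
    field_simp; ring
  · have h1 : Filter.Tendsto (slope Real.sin 0) (nhdsWithin 0 {(0:ℝ)}ᶜ) (nhds 1) := by
      have hd := Real.hasDerivAt_sin 0
      rw [hasDerivAt_iff_tendsto_slope] at hd
      simpa using hd
    have hhalf : Filter.Tendsto (fun φ:ℝ => φ/2) (nhdsWithin 0 (Set.Ioi 0))
        (nhdsWithin 0 {(0:ℝ)}ᶜ) := by
      apply tendsto_nhdsWithin_of_tendsto_nhds_of_eventually_within
      · have : Filter.Tendsto (fun φ:ℝ => φ/2) (nhds 0) (nhds 0) := by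
          simpa using ((continuous_id.div_const 2).tendsto (0:ℝ))
        exact this.mono_left nhdsWithin_le_nhds
      · filter_upwards [self_mem_nhdsWithin] with x hx
        simp only [Set.mem_compl_iff, Set.mem_singleton_iff]
        exact ne_of_gt (by simp at hx ⊢; linarith)
    have htend := (h1.comp hhalf)
    have hsqlim : Filter.Tendsto (fun φ:ℝ => (slope Real.sin 0 (φ/2))^2)
        (nhdsWithin 0 (Set.Ioi 0)) (nhds 1) := by
      have := htend.pow 2
      simpa using this
    refine hsqlim.congr' ?_
    filter_upwards [self_mem_nhdsWithin] with φ hφ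
    have hφ0 : (0:ℝ) < φ := hφ
    rw [slope_def_field]
    rw [cos_half_identity]
    rw [Real.sin_zero, sub_zero, sub_zero, div_pow]
    field_simp
    ring
  · rw [div_lt_one (by positivity)]
    nlinarith [Real.pi_gt_three]
end
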